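/- Let P and Q be n×n Hermitian matrices, I ⊆ {1,…,n}, and z ∈ ℂ with Im(z) > 0. Then |Σ_{k∈I} ((P - zI)⁻¹)_{kk} - Σ_{k∈I} ((Q - zI)⁻¹)_{kk}| ≤ (2/Im(z))·rank(P - Q). -/

import Mathlib

open Matrix

noncomputable section

variable {n : ℕ}

lemma herm_lower (P : Matrix (Fin n) (Fin n) ℂ) (hP : P.IsHermitian) (z : ℂ)
    (v : EuclideanSpace ℂ (Fin n)) :
    |z.im| * ‖v‖ ≤ ‖toEuclideanLin (P - z • (1 : Matrix (Fin n) (Fin n) ℂ)) v‖ := by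
  set T := toEuclideanLin (P - z • (1 : Matrix (Fin n) (Fin n) ℂ)) with hT
  have hTv : T v = toEuclideanLin P v - z • v := by
    rw [hT, map_sub, LinearMap.sub_apply]
    congr 1
    simp [Matrix.toEuclideanLin_apply, Matrix.smul_mulVec, Matrix.one_mulVec]
  have hsym : (toEuclideanLin P).IsSymmetric := Matrix.isHermitian_iff_isSymmetric.1 hP
  have hre : (inner ℂ v (toEuclideanLin P v) : ℂ).im = 0 := by
    rw [← Complex.conj_eq_iff_im, inner_conj_symm]
    exact hsym v v
  have hval : (inner ℂ v (T v) : ℂ) = inner ℂ v (toEuclideanLin P v) - z * ((‖v‖ ^ 2 : ℝ) : ℂ) := by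
    rw [hTv, inner_sub_right, inner_smul_right, inner_self_eq_norm_sq_to_K (𝕜 := ℂ)]
    norm_cast
  have hinner : (inner ℂ v (T v) : ℂ).im = - (z.im * ‖v‖ ^ 2) := by
    rw [hval, Complex.sub_im, hre, Complex.mul_im, Complex.ofReal_im, Complex.ofReal_re]
    ring
  have h1 : |z.im| * ‖v‖ ^ 2 ≤ ‖v‖ * ‖T v‖ := by
    calc |z.im| * ‖v‖ ^ 2 = |(inner ℂ v (T v) : ℂ).im| := by
          rw [hinner, abs_neg, abs_mul, abs_of_nonneg (by positivity : (0:ℝ) ≤ ‖v‖^2)]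
      _ ≤ ‖(inner ℂ v (T v) : ℂ)‖ := Complex.abs_im_le_norm _
      _ = ‖(inner ℂ v (T v) : ℂ)‖ := rfl
      _ ≤ ‖v‖ * ‖T v‖ := norm_inner_le_norm _ _
  rcases eq_or_lt_of_le (norm_nonneg v) with h0 | h0
  · simp [← h0]
  · nlinarith [norm_nonneg (T v)]

lemma herm_unit (P : Matrix (Fin n) (Fin n) ℂ) (hP : P.IsHermitian) (z : ℂ) (hz : z.im ≠ 0) :
    IsUnit (P - z • (1 : Matrix (Fin n) (Fin n) ℂ)).det := by
  rw [isUnit_iff_ne_zero]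
  intro hdet
  obtain ⟨v, hv, hmv⟩ := (Matrix.exists_mulVec_eq_zero_iff).2 hdet
  have h := herm_lower P hP z ((WithLp.equiv 2 (Fin n → ℂ)).symm v)
  rw [show toEuclideanLin (P - z • (1 : Matrix (Fin n) (Fin n) ℂ)) ((WithLp.equiv 2 (Fin n → ℂ)).symm v) = (WithLp.equiv 2 (Fin n → ℂ)).symm ((P - z • (1 : Matrix (Fin n) (Fin n) ℂ)) *ᵥ v) from Matrix.toEuclideanLin_apply_piLp_toLp _ _, hmv] at h
  rw [show ((WithLp.equiv 2 (Fin n → ℂ)).symm (0 : Fin n → ℂ)) = 0 from rfl, norm_zero] at h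
  have hpos : 0 < |z.im| := abs_pos.2 hz
  have : ‖(WithLp.equiv 2 (Fin n → ℂ)).symm v‖ = 0 := by nlinarith [norm_nonneg ((WithLp.equiv 2 (Fin n → ℂ)).symm v)]
  apply hv
  have h0 : (WithLp.equiv 2 (Fin n → ℂ)).symm v = 0 := norm_eq_zero.mp this
  calc v = (WithLp.equiv 2 (Fin n → ℂ)) ((WithLp.equiv 2 (Fin n → ℂ)).symm v) := by simp
    _ = 0 := by rw [h0]; simp

lemma herm_res_bound (P : Matrix (Fin n) (Fin n) ℂ) (hP : P.IsHermitian) (z : ℂ) (hz : z.im ≠ 0)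
    (w : EuclideanSpace ℂ (Fin n)) :
    ‖toEuclideanLin (P - z • (1 : Matrix (Fin n) (Fin n) ℂ))⁻¹ w‖ ≤ ‖w‖ / |z.im| := by
  set A := P - z • (1 : Matrix (Fin n) (Fin n) ℂ) with hA
  have hAA : A * A⁻¹ = 1 := Matrix.mul_nonsing_inv _ (herm_unit P hP z hz)
  have key : toEuclideanLin A (toEuclideanLin A⁻¹ w) = w := by
    simp [Matrix.toEuclideanLin_apply, Matrix.mulVec_mulVec, hAA, Matrix.one_mulVec]
  have h := herm_lower P hP z (toEuclideanLin A⁻¹ w)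
  rw [← hA, key] at h
  rw [le_div_iff₀ (abs_pos.2 hz)]
  linarith
variable {n : ℕ}

lemma core_bound (M : Matrix (Fin n) (Fin n) ℂ) (I : Finset (Fin n)) (C : ℝ) (hC0 : 0 ≤ C)
    (hC : ∀ w : EuclideanSpace ℂ (Fin n), ‖toEuclideanLin Mᴴ w‖ ≤ C * ‖w‖) :
    ‖∑ k ∈ I, M k k‖ ≤ C * M.rank := by
  classical
  set T := toEuclideanLin M with hT
  set W := LinearMap.range T with hW
  have hrank : M.rank = Module.finrank ℂ W := by
    rw [Matrix.rank_eq_finrank_range_toLin M (EuclideanSpace.basisFun (Fin n) ℂ).toBasis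
      (EuclideanSpace.basisFun (Fin n) ℂ).toBasis]
    rfl
  set r := Module.finrank ℂ W with hr
  let b := stdOrthonormalBasis ℂ W
  set u : Fin r → EuclideanSpace ℂ (Fin n) := fun i => (b i : EuclideanSpace ℂ (Fin n)) with hu
  have hunorm : ∀ i, ‖u i‖ = 1 := fun i => by
    exact b.orthonormal.1 i
  set e : Fin n → EuclideanSpace ℂ (Fin n) := fun k => EuclideanSpace.single k 1 with he
  set y : Fin r → EuclideanSpace ℂ (Fin n) := fun i => toEuclideanLin Mᴴ (u i) with hy
  have hexp0 : ∀ x : EuclideanSpace ℂ (Fin n), x ∈ W → x = ∑ i, (inner ℂ (u i) x : ℂ) • u i := by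
    intro x hx
    have h3 := congrArg (Subtype.val) (b.sum_repr' (⟨x, hx⟩ : W))
    refine h3.symm.trans ?_
    push_cast
    rfl
  have hexp : ∀ k, T (e k) = ∑ i, (inner ℂ (u i) (T (e k)) : ℂ) • u i :=
    fun k => hexp0 _ (LinearMap.mem_range_self T (e k))
  have hcoef : ∀ i k, (inner ℂ (u i) (T (e k)) : ℂ) = star (y i k) := by
    intro i k
    have h1 : (inner ℂ (u i) (T (e k)) : ℂ) = inner ℂ (toEuclideanLin Mᴴ (u i)) (e k) := by
      rw [Matrix.toEuclideanLin_conjTranspose_eq_adjoint, LinearMap.adjoint_inner_left]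
    rw [h1, he]
    simp [EuclideanSpace.inner_single_right, hy]
  have hdiag : ∀ k, (M k k : ℂ) = inner ℂ (e k) (T (e k)) := by
    intro k
    rw [he]
    simp only [EuclideanSpace.inner_single_left, _root_.map_one, one_mul]
    rw [show T (EuclideanSpace.single k 1) k
        = (M *ᵥ (WithLp.equiv 2 (Fin n → ℂ)) (EuclideanSpace.single k (1:ℂ))) k from rfl,
      show (WithLp.equiv 2 (Fin n → ℂ)) (EuclideanSpace.single k (1:ℂ)) = Pi.single k 1 from rfl, Matrix.mulVec_single]
    simp
  set w : Fin r → EuclideanSpace ℂ (Fin n) :=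
    fun i => (WithLp.equiv 2 (Fin n → ℂ)).symm (fun k => if k ∈ I then u i k else 0) with hwdef
  have hinnerw : ∀ i, (inner ℂ (y i) (w i) : ℂ) = ∑ k ∈ I, star (y i k) * u i k := by
    intro i
    rw [PiLp.inner_apply]
    simp only [RCLike.inner_apply, hwdef, show ∀ f : Fin n → ℂ, ∀ x, ((WithLp.equiv 2 (Fin n → ℂ)).symm f).ofLp x = f x from fun _ _ => rfl, ite_mul, zero_mul]
    rw [Finset.sum_ite_mem, Finset.univ_inter]
    exact Finset.sum_congr rfl fun k _ => mul_comm _ _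
  have hsum : ∑ k ∈ I, M k k = ∑ i, (inner ℂ (y i) (w i) : ℂ) := by
    calc ∑ k ∈ I, M k k = ∑ k ∈ I, ∑ i, star (y i k) * u i k := by
          refine Finset.sum_congr rfl fun k _ => ?_
          rw [hdiag k, hexp k, inner_sum]
          refine Finset.sum_congr rfl fun i _ => ?_
          rw [inner_smul_right, hcoef, he]
          simp only [EuclideanSpace.inner_single_left, _root_.map_one, one_mul]
      _ = ∑ i, ∑ k ∈ I, star (y i k) * u i k := Finset.sum_comm
      _ = ∑ i, (inner ℂ (y i) (w i) : ℂ) := by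
          exact Finset.sum_congr rfl fun i _ => (hinnerw i).symm
  have hbound : ∀ i, ‖(inner ℂ (y i) (w i) : ℂ)‖ ≤ C := by
    intro i
    have h2 : ‖w i‖ ≤ 1 := by
      have h3 : ‖w i‖ ≤ ‖u i‖ := by
        rw [EuclideanSpace.norm_eq, EuclideanSpace.norm_eq]
        apply Real.sqrt_le_sqrt
        apply Finset.sum_le_sum
        intro k _
        have h4 : ‖(w i) k‖ ≤ ‖(u i) k‖ := by
          by_cases hk : k ∈ I
          · simp [hwdef, hk]
          · simp [hwdef, hk]
        exact pow_le_pow_left₀ (norm_nonneg _) h4 2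
      rw [hunorm i] at h3; exact h3
    calc ‖(inner ℂ (y i) (w i) : ℂ)‖ ≤ ‖y i‖ * ‖w i‖ := norm_inner_le_norm _ _
      _ ≤ (C * ‖u i‖) * 1 := mul_le_mul (hC (u i)) h2 (norm_nonneg _) (by positivity)
      _ = C := by rw [hunorm i]; ring
  calc ‖∑ k ∈ I, M k k‖ = ‖∑ i, (inner ℂ (y i) (w i) : ℂ)‖ := by rw [hsum]
    _ ≤ ∑ i, ‖(inner ℂ (y i) (w i) : ℂ)‖ := norm_sum_le _ _
    _ ≤ ∑ _i : Fin r, C := Finset.sum_le_sum fun i _ => hbound i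
    _ = r * C := by simp [Finset.sum_const, nsmul_eq_mul]
    _ = C * M.rank := by rw [hrank]; ring

end

open Matrix

/-- Partial trace of the resolvent is stable under low-rank perturbation: for Hermitian
`P, Q`, an index set `I` and `Im z > 0`,
`|Σ_{k∈I} ((P - z)⁻¹)_{kk} - Σ_{k∈I} ((Q - z)⁻¹)_{kk}| ≤ (2/Im z)·rank(P - Q)`. -/
theorem partial_trace_resolvent_rank_bound (n : ℕ) (P Q : Matrix (Fin n) (Fin n) ℂ)
    (hP : P.IsHermitian) (hQ : Q.IsHermitian) (I : Finset (Fin n)) (z : ℂ) (hz : 0 < z.im) :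
    ‖(∑ k ∈ I, (P - z • (1 : Matrix (Fin n) (Fin n) ℂ))⁻¹ k k
        - ∑ k ∈ I, (Q - z • (1 : Matrix (Fin n) (Fin n) ℂ))⁻¹ k k)‖
      ≤ 2 / z.im * (P - Q).rank := by
  have hzne : z.im ≠ 0 := ne_of_gt hz
  set A := P - z • (1 : Matrix (Fin n) (Fin n) ℂ) with hA
  set B := Q - z • (1 : Matrix (Fin n) (Fin n) ℂ) with hB
  set M := A⁻¹ - B⁻¹ with hM
  have hAdet := herm_unit P hP z hzne
  have hBdet := herm_unit Q hQ z hzne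
  -- resolvent identity and rank bound
  have hres : M = A⁻¹ * ((Q - P) * B⁻¹) := by
    have h1 : A⁻¹ * ((Q - P) * B⁻¹) = A⁻¹ * ((B - A) * B⁻¹) := by
      congr 2
      rw [hA, hB]; abel
    rw [h1, hM]
    rw [Matrix.sub_mul, Matrix.mul_sub, Matrix.mul_nonsing_inv _ hBdet,
      ← Matrix.mul_assoc, Matrix.nonsing_inv_mul _ hAdet, Matrix.mul_one, Matrix.one_mul]
  have hrk : M.rank ≤ (P - Q).rank := by
    calc M.rank ≤ ((Q - P) * B⁻¹).rank := by rw [hres]; exact Matrix.rank_mul_le_right _ _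
      _ ≤ (Q - P).rank := Matrix.rank_mul_le_left _ _
      _ = ((P - Q) * (-1)).rank := by
          congr 1
          rw [Matrix.mul_neg, Matrix.mul_one, neg_sub]
      _ ≤ (P - Q).rank := Matrix.rank_mul_le_left _ _
  -- conjugate transpose of M
  have hMH : Mᴴ = (P - (starRingEnd ℂ z) • (1 : Matrix (Fin n) (Fin n) ℂ))⁻¹
      - (Q - (starRingEnd ℂ z) • (1 : Matrix (Fin n) (Fin n) ℂ))⁻¹ := by
    rw [hM, Matrix.conjTranspose_sub, Matrix.conjTranspose_nonsing_inv,
      Matrix.conjTranspose_nonsing_inv, hA, hB, Matrix.conjTranspose_sub,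
      Matrix.conjTranspose_sub, Matrix.conjTranspose_smul, Matrix.conjTranspose_one,
      hP.eq, hQ.eq]
    rfl
  have him : (starRingEnd ℂ z).im ≠ 0 := by
    simpa using hzne
  -- norm bound on Mᴴ
  have hC : ∀ w : EuclideanSpace ℂ (Fin n), ‖toEuclideanLin Mᴴ w‖ ≤ (2 / z.im) * ‖w‖ := by
    intro w
    rw [hMH, map_sub, LinearMap.sub_apply]
    have h1 := herm_res_bound P hP (starRingEnd ℂ z) him w
    have h2 := herm_res_bound Q hQ (starRingEnd ℂ z) him w
    have habs : |(starRingEnd ℂ z).im| = z.im := by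
      simp [abs_of_pos hz]
    rw [habs] at h1 h2
    calc ‖toEuclideanLin (P - (starRingEnd ℂ z) • (1 : Matrix (Fin n) (Fin n) ℂ))⁻¹ w
          - toEuclideanLin (Q - (starRingEnd ℂ z) • (1 : Matrix (Fin n) (Fin n) ℂ))⁻¹ w‖
        ≤ ‖toEuclideanLin (P - (starRingEnd ℂ z) • (1 : Matrix (Fin n) (Fin n) ℂ))⁻¹ w‖
          + ‖toEuclideanLin (Q - (starRingEnd ℂ z) • (1 : Matrix (Fin n) (Fin n) ℂ))⁻¹ w‖ :=
          norm_sub_le _ _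
      _ ≤ ‖w‖ / z.im + ‖w‖ / z.im := add_le_add h1 h2
      _ = (2 / z.im) * ‖w‖ := by field_simp; ring
  have hC0 : (0:ℝ) ≤ 2 / z.im := by positivity
  have hmain := core_bound M I (2 / z.im) hC0 hC
  have hsum : ∑ k ∈ I, A⁻¹ k k - ∑ k ∈ I, B⁻¹ k k = ∑ k ∈ I, M k k := by
    rw [← Finset.sum_sub_distrib]
    exact Finset.sum_congr rfl fun k _ => rfl
  rw [hsum]
  calc ‖∑ k ∈ I, M k k‖ ≤ 2 / z.im * M.rank := hmain
    _ ≤ 2 / z.im * (P - Q).rank := by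
        apply mul_le_mul_of_nonneg_left _ hC0
        exact_mod_cast hrk
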